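/- Almost-everywhere derivative of the cost-to-go function (abstract form of the paper's Lemma 3): let ι be a nonempty type and a, b : ι → ℝ with 0 ≤ a i and 0 ≤ b i for all i, and define J : ℝ → ℝ by J r = ⨅ i, (a i + r * b i). Suppose σ : ℝ → ι attains the infimum: J r = a (σ r) + r * b (σ r) for all r ≥ 0. Then for Lebesgue-almost every r ∈ Set.Ioi (0:ℝ), J is differentiable at r and deriv J r = b (σ r). -/

import Mathlib

open MeasureTheory

/-- Almost-everywhere derivative of the cost-to-go function (abstract Lemma 3):
if `σ` selects an attaining index for each `r ≥ 0`, then for Lebesgue-a.e. `r > 0`,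
`J` is differentiable at `r` with `deriv J r = b (σ r)`. -/
theorem gittins_cost_to_go_deriv_ae
    {ι : Type*} [Nonempty ι] (a b : ι → ℝ)
    (ha : ∀ i, 0 ≤ a i) (hb : ∀ i, 0 ≤ b i)
    (J : ℝ → ℝ) (hJ : ∀ r, J r = ⨅ i, (a i + r * b i))
    (σ : ℝ → ι) (hσ : ∀ r : ℝ, 0 ≤ r → J r = a (σ r) + r * b (σ r)) :
    ∀ᵐ r ∂(volume : Measure ℝ), r ∈ Set.Ioi (0 : ℝ) →
      DifferentiableAt ℝ J r ∧ deriv J r = b (σ r) := by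
  -- bounded below
  have hbdd : ∀ s : ℝ, 0 ≤ s → BddBelow (Set.range fun i => a i + s * b i) := by
    intro s hs
    exact ⟨0, by rintro x ⟨i, rfl⟩; exact add_nonneg (ha i) (mul_nonneg hs (hb i))⟩
  -- monotone extension
  set g : ℝ → ℝ := fun r => ⨅ i, (a i + max r 0 * b i) with hg
  have hgJ : ∀ r : ℝ, 0 < r → g r = J r := by
    intro r hr
    simp [hg, hJ r, max_eq_left hr.le]
  have hmono : Monotone g := by
    intro r s hrs
    refine ciInf_mono ?_ ?_
    · exact hbdd _ (le_max_right r 0)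
    · intro i
      have : max r 0 * b i ≤ max s 0 * b i :=
        mul_le_mul_of_nonneg_right (max_le_max hrs le_rfl) (hb i)
      exact add_le_add le_rfl this
  filter_upwards [hmono.ae_differentiableAt] with r hdg hr
  -- g = J near r
  have heq : g =ᶠ[nhds r] J := by
    filter_upwards [IsOpen.mem_nhds isOpen_Ioi hr] with s hs
    exact hgJ s hs
  have hdJ : DifferentiableAt ℝ J r := hdg.congr_of_eventuallyEq heq.symm
  refine ⟨hdJ, ?_⟩
  -- upper affine function touching J at r
  have hrpos : (0:ℝ) < r := hr
  set i := σ r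
  have hle : ∀ s : ℝ, 0 ≤ s → J s ≤ a i + s * b i := by
    intro s hs
    rw [hJ s]
    exact ciInf_le (hbdd s hs) i
  have hmin : IsLocalMin (fun s => a i + s * b i - J s) r := by
    have h0 : (fun s => a i + s * b i - J s) r = 0 := by
      simp [hσ r hrpos.le, i]
    rw [IsLocalMin, IsMinFilter]
    filter_upwards [IsOpen.mem_nhds isOpen_Ioi hr] with s hs
    have h1 := hle s (le_of_lt hs)
    have h2 := hσ r hrpos.le
    linarith
  have hd : DifferentiableAt ℝ (fun s => a i + s * b i - J s) r := by
    apply DifferentiableAt.sub _ hdJ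
    exact (differentiableAt_const _).add (differentiableAt_id.mul (differentiableAt_const _))
  have := hmin.deriv_eq_zero
  have hder : deriv (fun s => a i + s * b i - J s) r = b i - deriv J r := by
    rw [deriv_fun_sub (f := fun s => a i + s * b i) (by fun_prop) hdJ]
    simp [deriv_fun_add, mul_comm]
  rw [hder] at this
  linarith
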